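/- Let α > 0 and β > 0 be real numbers, and for F > 0 define φ(F) = (∫₀^F x^α (1+x)^{-β} dx) / (∫₀^F x^{α-1} (1+x)^{-β} dx). Then φ is non-decreasing on (0,∞). -/
import Mathlib


open intervalIntegral

lemma intg_aux (β γ a b : ℝ) (hγ : -1 < γ) (ha : 0 ≤ a) (hb : 0 ≤ b) :
    IntervalIntegrable (fun x => x ^ γ * (1 + x) ^ (-β)) MeasureTheory.volume a b := by
  apply (intervalIntegrable_rpow' hγ).mul_continuousOn
  apply ContinuousOn.rpow_const
  · exact (continuous_const.add continuous_id).continuousOn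
  · intro x hx
    left
    have : 0 ≤ x := by
      rcases hx with ⟨h1, _⟩
      simp only [min_def] at h1
      split_ifs at h1 <;> linarith
    positivity

theorem stmt_1 (α β : ℝ) (hα : 0 < α) (hβ : 0 < β)
    (φ : ℝ → ℝ)
    (hφ : ∀ F > 0, φ F =
      (∫ x in (0:ℝ)..F, x ^ α * (1 + x) ^ (-β)) /
      (∫ x in (0:ℝ)..F, x ^ (α - 1) * (1 + x) ^ (-β))) :
    ∀ F₁ F₂ : ℝ, 0 < F₁ → F₁ ≤ F₂ → φ F₁ ≤ φ F₂ := by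
  intro F₁ F₂ hF₁ h12
  have hF₂ : 0 < F₂ := lt_of_lt_of_le hF₁ h12
  have hα' : -1 < α := by linarith
  have hα'' : -1 < α - 1 := by linarith
  -- integrability
  have iN1 := intg_aux β α 0 F₁ hα' le_rfl hF₁.le
  have iD1 := intg_aux β (α - 1) 0 F₁ hα'' le_rfl hF₁.le
  have iN12 := intg_aux β α F₁ F₂ hα' hF₁.le hF₂.le
  have iD12 := intg_aux β (α - 1) F₁ F₂ hα'' hF₁.le hF₂.le
  set N₁ := ∫ x in (0:ℝ)..F₁, x ^ α * (1 + x) ^ (-β) with hN₁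
  set D₁ := ∫ x in (0:ℝ)..F₁, x ^ (α - 1) * (1 + x) ^ (-β) with hD₁
  set ΔN := ∫ x in F₁..F₂, x ^ α * (1 + x) ^ (-β) with hΔN
  set ΔD := ∫ x in F₁..F₂, x ^ (α - 1) * (1 + x) ^ (-β) with hΔD
  have hsplitN : (∫ x in (0:ℝ)..F₂, x ^ α * (1 + x) ^ (-β)) = N₁ + ΔN :=
    (integral_add_adjacent_intervals iN1 iN12).symm
  have hsplitD : (∫ x in (0:ℝ)..F₂, x ^ (α - 1) * (1 + x) ^ (-β)) = D₁ + ΔD :=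
    (integral_add_adjacent_intervals iD1 iD12).symm
  -- positivity of D₁
  have hD1pos : 0 < D₁ := by
    apply intervalIntegral_pos_of_pos_on iD1 _ hF₁
    intro x hx
    have hx0 : 0 < x := hx.1
    have h1x : 0 < 1 + x := by linarith
    positivity
  -- nonnegativity of ΔD
  have hΔDnn : 0 ≤ ΔD := by
    apply integral_nonneg h12
    intro x hx
    have h1x : (0:ℝ) < 1 + x := by linarith [hx.1, hF₁]
    have hx0 : (0:ℝ) ≤ x := le_trans hF₁.le hx.1
    positivity
  -- N₁ ≤ F₁ * D₁
  have hN1le : N₁ ≤ F₁ * D₁ := by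
    rw [hN₁, hD₁, ← integral_const_mul]
    apply integral_mono_on hF₁.le iN1 (iD1.const_mul F₁)
    intro x hx
    rcases eq_or_lt_of_le hx.1 with h0 | h0
    · rw [← h0]
      have : (0:ℝ) ^ α = 0 := Real.zero_rpow (ne_of_gt hα)
      rw [this, zero_mul]
      have h1 : (0:ℝ) ≤ (0:ℝ) ^ (α - 1) := Real.rpow_nonneg le_rfl _
      have h2 : (0:ℝ) ≤ (1 + 0:ℝ) ^ (-β) := Real.rpow_nonneg (by norm_num) _
      positivity
    · have h1x : (0:ℝ) < 1 + x := by linarith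
      have hxpow : x ^ α = x * x ^ (α - 1) := by
        rw [← Real.rpow_one_add' (le_of_lt h0) (by ring_nf; exact ne_of_gt hα)]
        ring_nf
      rw [hxpow]
      have hw : (0:ℝ) ≤ (1 + x) ^ (-β) := Real.rpow_nonneg h1x.le _
      have hxp : (0:ℝ) ≤ x ^ (α - 1) := Real.rpow_nonneg h0.le _
      rw [mul_assoc]
      exact mul_le_mul_of_nonneg_right hx.2 (mul_nonneg hxp hw)
  -- F₁ * ΔD ≤ ΔN
  have hΔNge : F₁ * ΔD ≤ ΔN := by
    rw [hΔN, hΔD, ← integral_const_mul]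
    apply integral_mono_on h12 (iD12.const_mul F₁) iN12
    intro x hx
    have hx0 : 0 < x := lt_of_lt_of_le hF₁ hx.1
    have h1x : (0:ℝ) < 1 + x := by linarith
    have hxpow : x ^ α = x * x ^ (α - 1) := by
      rw [← Real.rpow_one_add' hx0.le (by ring_nf; exact ne_of_gt hα)]
      ring_nf
    rw [hxpow]
    have hw : (0:ℝ) ≤ (1 + x) ^ (-β) := Real.rpow_nonneg h1x.le _
    have hxp : (0:ℝ) ≤ x ^ (α - 1) := Real.rpow_nonneg hx0.le _
    rw [mul_assoc]
    exact mul_le_mul_of_nonneg_right hx.1 (mul_nonneg hxp hw)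
  have hD2pos : 0 < D₁ + ΔD := by linarith
  rw [hφ F₁ hF₁, hφ F₂ hF₂, hsplitN, hsplitD, ← hN₁, ← hD₁,
    div_le_div_iff₀ hD1pos hD2pos]
  nlinarith
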